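/- Under the Setup with the dual-side data and a complement Ỹ of Y' in Y, define for x̃ ∈ X̃ the conjugate character ^{x̃}λ̃ : ZỸ → ℂˣ by (^{x̃}λ̃)(u) := λ̃(x̃⁻¹·u·x̃) (well-defined since x̃⁻¹·u·x̃ ∈ ZỸ for u ∈ ZỸ). Then the map x̃ ↦ ^{x̃}λ̃ is injective on X̃, and the set of all group homomorphisms μ : ZỸ → ℂˣ whose restriction to Z equals λ is exactly {^{x̃}λ̃ : x̃ ∈ X̃}. -/

import Mathlib

open scoped Pointwise

/-- Under the Setup with the dual-side data and a complement `Ỹ` of `Y'`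
in `Y`, define for `x̃ ∈ X̃` the conjugate character `^{x̃}λ̃ : ZỸ → ℂˣ`,
`u ↦ λ̃(x̃⁻¹·u·x̃)` (well defined since `ZỸ ⊴ V`).  Then the map `x̃ ↦ ^{x̃}λ̃` is
injective on `X̃`, and the set of all group homomorphisms `μ : ZỸ → ℂˣ` restricting to
`λ` on `Z` is exactly `{^{x̃}λ̃ : x̃ ∈ X̃}`. -/
theorem conjugates_of_lamtilde
    {V : Type*} [Group V] [Fintype V]
    (H Y Z : Subgroup V) (X : Set V)
    (hXrep : ∀ v : V, ∃! p : ↥H × ↥X, (p.1 : V) * (p.2 : V) = v)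
    (hZcent : Z ≤ Subgroup.center V)
    (hYH : Y ≤ H)
    (hYcent : ∀ y ∈ Y, ∀ h ∈ H, y * h = h * y)
    (hZY : Z ⊓ Y = ⊥)
    (lam : Z →* ℂˣ)
    (hXYZ : ∀ x ∈ X, ∀ y ∈ Y, x⁻¹ * y⁻¹ * x * y ∈ Z)
    -- `H'` is the subgroup `H·X'` of `V` (the inertia group of `λ̂`)
    (H' : Subgroup V)
    (hH' : (H' : Set V) = {v : V | ∃ h ∈ H, ∃ x ∈ X,
      (∀ (y : V) (hy : y ∈ Y) (hc : x⁻¹ * y⁻¹ * x * y ∈ Z),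
        lam ⟨x⁻¹ * y⁻¹ * x * y, hc⟩ = 1) ∧ v = h * x})
    -- `X̃` is a transversal of the right cosets of `H'` in `V`
    (Xt : Set V)
    (hXtrep : ∀ v : V, ∃! p : ↥H' × ↥Xt, (p.1 : V) * (p.2 : V) = v)
    -- `Ỹ` is a complement of `Y' = {y ∈ Y : λ([x,y]) = 1 ∀ x ∈ X}` in `Y`
    (Yt : Subgroup V) (hYtY : Yt ≤ Y)
    (hcompl₁ : ∀ y : V, y ∈ Yt →
      (y ∈ Y ∧ ∀ x ∈ X, ∀ (hc : x⁻¹ * y⁻¹ * x * y ∈ Z),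
        lam ⟨x⁻¹ * y⁻¹ * x * y, hc⟩ = 1) → y = 1)
    (hcompl₂ : ∀ y ∈ Y, ∃ y' : V,
      (y' ∈ Y ∧ ∀ x ∈ X, ∀ (hc : x⁻¹ * y'⁻¹ * x * y' ∈ Z),
        lam ⟨x⁻¹ * y'⁻¹ * x * y', hc⟩ = 1) ∧ ∃ yt ∈ Yt, y = y' * yt)
    -- `W₂` is the subgroup `ZỸ` of `V`, and `λ̃ : ZỸ → ℂˣ` satisfies `λ̃(z·ỹ) = λ(z)`
    (W₂ : Subgroup V)
    (hW₂ : (W₂ : Set V) = (Z : Set V) * (Yt : Set V))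
    (lamt : W₂ →* ℂˣ)
    (hlamt : ∀ (z yt : V) (hz : z ∈ Z) (hyt : yt ∈ Yt) (hm : z * yt ∈ W₂),
      lamt ⟨z * yt, hm⟩ = lam ⟨z, hz⟩)
    -- `ZỸ` is normal in `V`, so the conjugate characters are well defined
    (hconjmem : ∀ (g : V), ∀ u ∈ W₂, g⁻¹ * u * g ∈ W₂)
    -- `conjlam x̃ : ZỸ → ℂˣ` is the conjugate character `u ↦ λ̃(x̃⁻¹·u·x̃)`
    (conjlam : V → (↥W₂ → ℂˣ))
    (hconjlam : ∀ (xt : V) (u : ↥W₂),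
      conjlam xt u = lamt ⟨xt⁻¹ * (u : V) * xt, hconjmem xt (u : V) u.2⟩) :
    Set.InjOn conjlam Xt ∧
    {f : ↥W₂ → ℂˣ | ∃ μ : ↥W₂ →* ℂˣ, ⇑μ = f ∧
        ∀ (z : V) (hz : z ∈ Z) (hm : z ∈ W₂), μ ⟨z, hm⟩ = lam ⟨z, hz⟩} =
      {f : ↥W₂ → ℂˣ | ∃ xt ∈ Xt, f = conjlam xt} := by
  classical
  -- central elements commute with everything
  have hcen : ∀ z ∈ Z, ∀ g : V, g * z = z * g := fun z hz g =>
    Subgroup.mem_center_iff.mp (hZcent hz) g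
  -- dropping the `H`-part of `v` in commutators with elements of `Y`
  have E1 : ∀ y ∈ Y, ∀ h ∈ H, ∀ x : V,
      y⁻¹ * (h * x)⁻¹ * y * (h * x) = y⁻¹ * x⁻¹ * y * x := by
    intro y hy h hh x
    have h1 : h⁻¹ * (y * h) = y := by rw [hYcent y hy h hh]; group
    calc y⁻¹ * (h * x)⁻¹ * y * (h * x) = y⁻¹ * x⁻¹ * (h⁻¹ * (y * h)) * x := by group
      _ = y⁻¹ * x⁻¹ * y * x := by rw [h1]
  -- commutators of `Y` with anything lie in `Z`
  have hmemY : ∀ y ∈ Y, ∀ v : V, y⁻¹ * v⁻¹ * y * v ∈ Z := by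
    intro y hy v
    obtain ⟨⟨h, x⟩, hp, -⟩ := hXrep v
    rw [← hp, E1 y hy h h.2 x]
    have h2 : y⁻¹ * (x : V)⁻¹ * y * x = ((x : V)⁻¹ * y⁻¹ * x * y)⁻¹ := by group
    rw [h2]
    exact inv_mem (hXYZ x x.2 y hy)
  -- helpers for values of `lam`
  have lamc : ∀ (a b : V) (ha : a ∈ Z) (hb : b ∈ Z), a = b →
      lam ⟨a, ha⟩ = lam ⟨b, hb⟩ := by
    intro a b ha hb h
    subst h; rfl
  have lamm : ∀ (a b c : V) (ha : a ∈ Z) (hb : b ∈ Z) (hc : c ∈ Z), a = b * c →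
      lam ⟨a, ha⟩ = lam ⟨b, hb⟩ * lam ⟨c, hc⟩ := by
    intro a b c ha hb hc h
    rw [lamc a (b * c) ha (mul_mem hb hc) h]
    exact map_mul lam ⟨b, hb⟩ ⟨c, hc⟩
  have lam1 : ∀ (a : V) (ha : a ∈ Z), a = 1 → lam ⟨a, ha⟩ = 1 := by
    intro a ha h
    rw [lamc a 1 ha (one_mem Z) h]
    exact map_one lam
  have lamneg : ∀ (a b : V) (ha : a ∈ Z) (hb : b ∈ Z), a = b⁻¹ →
      lam ⟨a, ha⟩ = (lam ⟨b, hb⟩)⁻¹ := by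
    intro a b ha hb h
    rw [lamc a b⁻¹ ha (inv_mem hb) h]
    exact map_inv lam ⟨b, hb⟩
  -- bimultiplicativity of the commutator pairing
  have P2 : ∀ (y₁ y₂ : V), y₁ ∈ Y → y₂ ∈ Y → ∀ v : V,
      (y₁ * y₂)⁻¹ * v⁻¹ * (y₁ * y₂) * v =
        (y₁⁻¹ * v⁻¹ * y₁ * v) * (y₂⁻¹ * v⁻¹ * y₂ * v) := by
    intro y₁ y₂ hy₁ hy₂ v
    have h1 := hcen _ (hmemY y₁ hy₁ v) y₂⁻¹
    calc (y₁ * y₂)⁻¹ * v⁻¹ * (y₁ * y₂) * v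
        = y₂⁻¹ * (y₁⁻¹ * v⁻¹ * y₁ * v) * (v⁻¹ * y₂ * v) := by group
      _ = (y₁⁻¹ * v⁻¹ * y₁ * v) * y₂⁻¹ * (v⁻¹ * y₂ * v) := by rw [h1]
      _ = (y₁⁻¹ * v⁻¹ * y₁ * v) * (y₂⁻¹ * v⁻¹ * y₂ * v) := by group
  have P1 : ∀ y ∈ Y, ∀ v w : V,
      y⁻¹ * (v * w)⁻¹ * y * (v * w) =
        (y⁻¹ * w⁻¹ * y * w) * (y⁻¹ * v⁻¹ * y * v) := by
    intro y hy v w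
    have h1 := hcen _ (hmemY y hy v) w
    calc y⁻¹ * (v * w)⁻¹ * y * (v * w)
        = y⁻¹ * w⁻¹ * y * ((y⁻¹ * v⁻¹ * y * v) * w) := by group
      _ = y⁻¹ * w⁻¹ * y * (w * (y⁻¹ * v⁻¹ * y * v)) := by rw [← h1]
      _ = (y⁻¹ * w⁻¹ * y * w) * (y⁻¹ * v⁻¹ * y * v) := by group
  -- the pairing homomorphism `Φ : V →* (Ỹ →* ℂˣ)`
  have hmem' : ∀ (yt : ↥Yt) (v : V), (yt : V)⁻¹ * v⁻¹ * yt * v ∈ Z :=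
    fun yt v => hmemY yt (hYtY yt.2) v
  let Φ : V →* (↥Yt →* ℂˣ) :=
    { toFun := fun v =>
        { toFun := fun yt => lam ⟨(yt : V)⁻¹ * v⁻¹ * yt * v, hmem' yt v⟩
          map_one' := lam1 _ _ (by rw [OneMemClass.coe_one]; group)
          map_mul' := fun y₁ y₂ =>
            lamm _ _ _ _ (hmem' y₁ v) (hmem' y₂ v)
              (P2 y₁ y₂ (hYtY y₁.2) (hYtY y₂.2) v) }
      map_one' := MonoidHom.ext fun yt => lam1 _ _ (by group)
      map_mul' := fun v w => MonoidHom.ext fun y =>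
        ((lamm _ _ _ (hmem' y (v * w)) (hmemY y (hYtY y.2) w) (hmemY y (hYtY y.2) v)
          (P1 y (hYtY y.2) v w)).trans (mul_comm _ _)) }
  have Φdef : ∀ (v : V) (yt : ↥Yt),
      Φ v yt = lam ⟨(yt : V)⁻¹ * v⁻¹ * yt * v, hmem' yt v⟩ := fun v yt => rfl
  -- `H'` is the kernel of `Φ`
  have KH1 : ∀ v : V, v ∈ H' → Φ v = 1 := by
    intro v hv
    have hv' : v ∈ {v : V | ∃ h ∈ H, ∃ x ∈ X,
        (∀ (y : V) (hy : y ∈ Y) (hc : x⁻¹ * y⁻¹ * x * y ∈ Z),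
          lam ⟨x⁻¹ * y⁻¹ * x * y, hc⟩ = 1) ∧ v = h * x} := by
      rw [← hH']; exact hv
    obtain ⟨h, hh, x, hx, hcond, rfl⟩ := hv'
    refine MonoidHom.ext fun yt => ?_
    show Φ (h * x) yt = 1
    have hmx : x⁻¹ * (yt : V)⁻¹ * x * yt ∈ Z := hXYZ x hx yt (hYtY yt.2)
    calc Φ (h * x) yt = lam ⟨(yt : V)⁻¹ * (h * x)⁻¹ * yt * (h * x), hmem' yt (h * x)⟩ :=
          Φdef (h * x) yt
      _ = (lam ⟨x⁻¹ * (yt : V)⁻¹ * x * yt, hmx⟩)⁻¹ :=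
          lamneg _ _ _ _ (by rw [E1 yt (hYtY yt.2) h hh x]; group)
      _ = 1 := by rw [hcond yt (hYtY yt.2) hmx, inv_one]
  have KH2 : ∀ v : V, Φ v = 1 → v ∈ H' := by
    intro v hv1
    obtain ⟨⟨h, x⟩, hp, -⟩ := hXrep v
    have hcond : ∀ (y : V) (hy : y ∈ Y) (hc : (x : V)⁻¹ * y⁻¹ * x * y ∈ Z),
        lam ⟨(x : V)⁻¹ * y⁻¹ * x * y, hc⟩ = 1 := by
      intro y hy hc
      obtain ⟨y', ⟨hy', hy'cond⟩, yt, hyt, rfl⟩ := hcompl₂ y hy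
      have hm1 : (y' * yt)⁻¹ * (x : V)⁻¹ * (y' * yt) * x ∈ Z := hmemY _ hy x
      have hm2 : y'⁻¹ * (x : V)⁻¹ * y' * x ∈ Z := hmemY y' hy' x
      have hm3 : yt⁻¹ * (x : V)⁻¹ * yt * x ∈ Z := hmemY yt (hYtY hyt) x
      have s1 : lam ⟨_, hc⟩ = (lam ⟨_, hm1⟩)⁻¹ := lamneg _ _ _ _ (by group)
      have s2 : lam ⟨_, hm1⟩ = lam ⟨_, hm2⟩ * lam ⟨_, hm3⟩ :=
        lamm _ _ _ _ _ _ (P2 y' yt hy' (hYtY hyt) x)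
      have s3 : lam ⟨_, hm2⟩ = 1 := by
        have hcx : (x : V)⁻¹ * y'⁻¹ * x * y' ∈ Z := hXYZ x x.2 y' hy'
        rw [lamneg _ _ hm2 hcx (by group), hy'cond x x.2 hcx, inv_one]
      have s4 : lam ⟨_, hm3⟩ = 1 := by
        have h5 : Φ v ⟨yt, hyt⟩ = 1 := by rw [hv1]; rfl
        have h6 : lam ⟨_, hm3⟩ = Φ v ⟨yt, hyt⟩ := by
          rw [Φdef v ⟨yt, hyt⟩]
          exact lamc _ _ _ _ (by rw [← hp, E1 yt (hYtY hyt) h h.2 x])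
        rw [h6, h5]
      rw [s1, s2, s3, s4, one_mul, inv_one]
    have : v ∈ (H' : Set V) := by
      rw [hH']
      exact ⟨h, h.2, x, x.2, hcond, hp.symm⟩
    exact this
  -- commutativity of `Ỹ` and of `V ⧸ ker Φ`
  letI instYtComm : CommGroup ↥Yt :=
    { (inferInstance : Group ↥Yt) with
      mul_comm := fun a b =>
        Subtype.ext (hYcent a (hYtY a.2) b (hYH (hYtY b.2))) }
  have hinj : Function.Injective (QuotientGroup.kerLift Φ) :=
    QuotientGroup.kerLift_injective Φ
  have hGcomm : ∀ a b : V ⧸ Φ.ker, a * b = b * a := by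
    intro a b
    refine hinj ?_
    rw [map_mul, map_mul]
    exact mul_comm (G := ↥Yt →* ℂˣ) _ _
  letI instGComm : CommGroup (V ⧸ Φ.ker) :=
    { (inferInstance : Group (V ⧸ Φ.ker)) with
      mul_comm := hGcomm }
  -- the evaluation-based injection `Ỹ → ((V ⧸ ker Φ) →* ℂˣ)`
  have hkerH' : ∀ v : V, v ∈ Φ.ker ↔ v ∈ H' := by
    intro v
    constructor
    · intro hv; exact KH2 v hv
    · intro hv; exact KH1 v hv
  let ev : ↥Yt → ((↥Yt →* ℂˣ) →* ℂˣ) := fun yt =>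
    { toFun := fun f => f yt
      map_one' := rfl
      map_mul' := fun f g => rfl }
  let Ψ : ↥Yt → ((V ⧸ Φ.ker) →* ℂˣ) := fun yt =>
    QuotientGroup.lift Φ.ker ((ev yt).comp Φ) (by
      intro v hv
      have : Φ v = 1 := hv
      show Φ v yt = 1
      rw [this]; rfl)
  have hΨinj : Function.Injective Ψ := by
    intro y₁ y₂ h12
    have hval : ∀ v : V, Φ v y₁ = Φ v y₂ := by
      intro v
      have := congrArg (fun f => f (QuotientGroup.mk v : V ⧸ Φ.ker)) h12
      simpa [Ψ, ev] using this
    have hone : ∀ v : V, Φ v (y₁ * y₂⁻¹) = 1 := by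
      intro v
      rw [map_mul, map_inv, hval v, mul_inv_cancel]
    have hY1 : ((y₁ * y₂⁻¹ : ↥Yt) : V) = 1 := by
      apply hcompl₁ _ (y₁ * y₂⁻¹).2
      refine ⟨hYtY (y₁ * y₂⁻¹).2, ?_⟩
      intro x hx hcx
      have := hone x
      rw [Φdef x (y₁ * y₂⁻¹)] at this
      rw [lamneg _ _ hcx (hmem' (y₁ * y₂⁻¹) x) (by group), this, inv_one]
    have : y₁ * y₂⁻¹ = 1 := Subtype.ext hY1
    have := mul_inv_eq_one.mp (by exact_mod_cast this)
    exact this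
  -- duality: counting characters
  haveI : Finite ↥Yt := inferInstance
  haveI hne1 : NeZero ((Monoid.exponent ↥Yt : ℂ)) :=
    ⟨by exact_mod_cast Monoid.exponent_ne_zero_of_finite⟩
  obtain ⟨eD⟩ := CommGroup.monoidHom_mulEquiv_of_hasEnoughRootsOfUnity ↥Yt ℂ
  haveI : Finite (V ⧸ Φ.ker) := Quotient.finite _
  haveI hne2 : NeZero ((Monoid.exponent (V ⧸ Φ.ker) : ℂ)) :=
    ⟨by exact_mod_cast Monoid.exponent_ne_zero_of_finite⟩
  obtain ⟨eG⟩ := CommGroup.monoidHom_mulEquiv_of_hasEnoughRootsOfUnity (V ⧸ Φ.ker) ℂ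
  haveI finD : Finite (↥Yt →* ℂˣ) := Finite.of_equiv _ eD.toEquiv.symm
  haveI finGd : Finite ((V ⧸ Φ.ker) →* ℂˣ) := Finite.of_equiv _ eG.toEquiv.symm
  have c1 : Nat.card (V ⧸ Φ.ker) ≤ Nat.card (↥Yt →* ℂˣ) :=
    Nat.card_le_card_of_injective _ hinj
  have cD : Nat.card (↥Yt →* ℂˣ) = Nat.card ↥Yt := Nat.card_congr eD.toEquiv
  have c2 : Nat.card ↥Yt ≤ Nat.card ((V ⧸ Φ.ker) →* ℂˣ) :=
    Nat.card_le_card_of_injective Ψ hΨinj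
  have cG : Nat.card ((V ⧸ Φ.ker) →* ℂˣ) = Nat.card (V ⧸ Φ.ker) := Nat.card_congr eG.toEquiv
  have ceq : Nat.card (V ⧸ Φ.ker) = Nat.card (↥Yt →* ℂˣ) := by omega
  have hsurj : Function.Surjective (QuotientGroup.kerLift Φ) :=
    ((Nat.bijective_iff_injective_and_card _).mpr ⟨hinj, ceq⟩).surjective
  have hsurjΦ : ∀ χ : ↥Yt →* ℂˣ, ∃ v : V, Φ v = χ := by
    intro χ
    obtain ⟨g, hg⟩ := hsurj χ
    obtain ⟨v, rfl⟩ := QuotientGroup.mk_surjective g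
    exact ⟨v, by rw [← QuotientGroup.kerLift_mk Φ v, hg]⟩
  -- membership helpers for `W₂`
  have hZW : Z ≤ W₂ := by
    intro z hz
    have : z ∈ (W₂ : Set V) := by
      rw [hW₂]; exact Set.mem_mul.mpr ⟨z, hz, 1, one_mem Yt, mul_one z⟩
    exact this
  have hYtW : Yt ≤ W₂ := by
    intro yt hyt
    have : yt ∈ (W₂ : Set V) := by
      rw [hW₂]; exact Set.mem_mul.mpr ⟨1, one_mem Z, yt, hyt, one_mul yt⟩
    exact this
  have hWdec : ∀ u : ↥W₂, ∃ z ∈ Z, ∃ yt ∈ Yt, z * yt = (u : V) := by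
    intro u
    have : (u : V) ∈ (W₂ : Set V) := u.2
    rw [hW₂] at this
    exact Set.mem_mul.mp this
  -- the main computation: values of conjugate characters
  have conjC : ∀ (v z yt : V) (hz : z ∈ Z) (hyt : yt ∈ Yt) (hm : z * yt ∈ W₂),
      conjlam v ⟨z * yt, hm⟩ =
        lam ⟨z, hz⟩ * lam ⟨yt⁻¹ * v⁻¹ * yt * v, hmemY yt (hYtY hyt) v⟩ := by
    intro v z yt hz hyt hm
    have hcm : yt⁻¹ * v⁻¹ * yt * v ∈ Z := hmemY yt (hYtY hyt) v
    have e : v⁻¹ * (z * yt) * v = (z * (yt⁻¹ * v⁻¹ * yt * v)) * yt := by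
      have h1 := hcen z hz v⁻¹
      have h2 := hcen _ hcm yt
      calc v⁻¹ * (z * yt) * v = v⁻¹ * z * (yt * v) := by group
        _ = z * v⁻¹ * (yt * v) := by rw [h1]
        _ = z * (yt * (yt⁻¹ * v⁻¹ * yt * v)) := by group
        _ = z * ((yt⁻¹ * v⁻¹ * yt * v) * yt) := by rw [h2]
        _ = (z * (yt⁻¹ * v⁻¹ * yt * v)) * yt := by group
    have hm2 : (z * (yt⁻¹ * v⁻¹ * yt * v)) * yt ∈ W₂ := e ▸ hconjmem v (z * yt) hm
    calc conjlam v ⟨z * yt, hm⟩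
        = lamt ⟨v⁻¹ * (z * yt) * v, hconjmem v (z * yt) hm⟩ := hconjlam v ⟨z * yt, hm⟩
      _ = lamt ⟨(z * (yt⁻¹ * v⁻¹ * yt * v)) * yt, hm2⟩ := congrArg lamt (Subtype.ext e)
      _ = lam ⟨z * (yt⁻¹ * v⁻¹ * yt * v), mul_mem hz hcm⟩ :=
          hlamt _ yt (mul_mem hz hcm) hyt hm2
      _ = lam ⟨z, hz⟩ * lam ⟨yt⁻¹ * v⁻¹ * yt * v, hcm⟩ := lamm _ _ _ _ hz hcm rfl
  have key : ∀ (v : V) (yt : ↥Yt), conjlam v ⟨(yt : V), hYtW yt.2⟩ = Φ v yt := by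
    intro v yt
    have hm : (1 : V) * yt ∈ W₂ := by rw [one_mul]; exact hYtW yt.2
    have h1 : (⟨(yt : V), hYtW yt.2⟩ : ↥W₂) = ⟨(1 : V) * yt, hm⟩ :=
      Subtype.ext (one_mul _).symm
    rw [h1, conjC v 1 yt (one_mem Z) yt.2 hm, lam1 1 (one_mem Z) rfl, one_mul,
      Φdef v yt]
  constructor
  · -- injectivity on `X̃`
    intro a ha b hb hab
    have hΦab : Φ a = Φ b := MonoidHom.ext fun yt => by
      rw [← key a yt, ← key b yt, hab]
    have hmemH' : b * a⁻¹ ∈ H' := by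
      apply KH2
      rw [map_mul, map_inv, hΦab, mul_inv_cancel]
    obtain ⟨p, hp, hup⟩ := hXtrep b
    have e1 := hup (⟨⟨b * a⁻¹, hmemH'⟩, ⟨a, ha⟩⟩) (by
      show (b * a⁻¹) * a = b
      group)
    have e2 := hup (⟨1, ⟨b, hb⟩⟩) (by
      show ((1 : ↥H') : V) * b = b
      rw [Subgroup.coe_one, one_mul])
    have e3 := e1.trans e2.symm
    have : ((⟨a, ha⟩ : ↥Xt) : V) = ((⟨b, hb⟩ : ↥Xt) : V) :=
      congrArg (fun p : ↥H' × ↥Xt => ((p.2 : V))) e3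
    exact this
  · -- the set of extensions of `lam` equals the set of conjugates
    ext f
    constructor
    · rintro ⟨μ, hμf, hμres⟩
      -- restrict `μ` to a character of `Ỹ` and realize it as `Φ xt`
      let χ : ↥Yt →* ℂˣ := μ.comp (Subgroup.inclusion hYtW)
      obtain ⟨v, hv⟩ := hsurjΦ χ
      obtain ⟨⟨h', xt⟩, hp, -⟩ := hXtrep v
      have hΦh' : Φ h' = 1 := KH1 h' h'.2
      have hΦxt : Φ xt = χ := by
        have h7 : Φ v = Φ xt := by
          refine MonoidHom.ext fun y => ?_
          conv_lhs => rw [← hp]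
          rw [map_mul, MonoidHom.mul_apply, hΦh', MonoidHom.one_apply, one_mul]
        rw [← h7]; exact hv
      refine ⟨xt, xt.2, ?_⟩
      funext u
      obtain ⟨z, hz, yt, hyt, hzy⟩ := hWdec u
      have hu : u = ⟨z * yt, by rw [hzy]; exact u.2⟩ := Subtype.ext hzy.symm
      have hcm : yt⁻¹ * (xt : V)⁻¹ * yt * xt ∈ Z := hmemY yt (hYtY hyt) xt
      have hc1 : conjlam xt u =
          lam ⟨z, hz⟩ * lam ⟨yt⁻¹ * (xt : V)⁻¹ * yt * xt, hcm⟩ := by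
        rw [hu]; exact conjC xt z yt hz hyt _
      have hc2 : lam ⟨yt⁻¹ * (xt : V)⁻¹ * yt * xt, hcm⟩ = μ ⟨yt, hYtW hyt⟩ := by
        have : Φ xt ⟨yt, hyt⟩ = χ ⟨yt, hyt⟩ := by rw [hΦxt]
        rw [Φdef xt ⟨yt, hyt⟩] at this
        exact this
      have hc3 : lam ⟨z, hz⟩ = μ ⟨z, hZW hz⟩ := (hμres z hz (hZW hz)).symm
      have hc4 : μ ⟨z, hZW hz⟩ * μ ⟨yt, hYtW hyt⟩ = μ u := by
        rw [← map_mul]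
        exact congrArg μ (Subtype.ext hzy)
      rw [← hμf]
      rw [hc1, hc2, hc3, hc4]
    · rintro ⟨xt, hxt, rfl⟩
      -- the conjugate character is a homomorphism extending `lam`
      let cj : ↥W₂ →* ↥W₂ :=
        { toFun := fun u => ⟨xt⁻¹ * u * xt, hconjmem xt u u.2⟩
          map_one' := Subtype.ext (by
            show xt⁻¹ * ((1 : ↥W₂) : V) * xt = ((1 : ↥W₂) : V)
            rw [OneMemClass.coe_one]; group)
          map_mul' := fun u v => Subtype.ext (by
            show xt⁻¹ * ((u : V) * v) * xt = (xt⁻¹ * u * xt) * (xt⁻¹ * v * xt)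
            group) }
      refine ⟨lamt.comp cj, ?_, ?_⟩
      · funext u
        exact (hconjlam xt u).symm
      · intro z hz hm
        have e : xt⁻¹ * z * xt = z * 1 := by
          have h1 := hcen z hz xt⁻¹
          calc xt⁻¹ * z * xt = z * xt⁻¹ * xt := by rw [h1]
            _ = z * 1 := by group
        have hm2 : z * 1 ∈ W₂ := by rw [mul_one]; exact hm
        calc (lamt.comp cj) ⟨z, hm⟩ = lamt ⟨xt⁻¹ * z * xt, hconjmem xt z hm⟩ := rfl
          _ = lamt ⟨z * 1, hm2⟩ := congrArg lamt (Subtype.ext e)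
          _ = lam ⟨z, hz⟩ := hlamt z 1 hz (one_mem Yt) hm2
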